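/- Let x_k denote the unique solution in (0,1) of F_k(x) = 1 for k ≥ 3, where F_n is defined by F_0(x)=1, F_1(x)=x, F_n(x)=2(2-x)F_{n-1}(x)-F_{n-2}(x). Then the sequence (x_k) is strictly decreasing and converges to 1/3. -/

import Mathlib

noncomputable def F : ℕ → ℝ → ℝ
  | 0, _ => 1
  | 1, x => x
  | (n+2), x => 2 * (2 - x) * F (n+1) x - F n x

lemma closed_form (q : ℝ) (hq : 1 < q) (n : ℕ) :
    F n (2 - (q + q⁻¹)/2) = ((3-q)*q^n + (3*q-1)*(q⁻¹)^n)/(2*(q+1)) := by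
  have hq0 : q ≠ 0 := by positivity
  have hq1 : q + 1 ≠ 0 := by positivity
  induction n using Nat.twoStepInduction with
  | zero => simp [F]; field_simp; ring
  | one => simp [F]; field_simp; ring
  | more n ih1 ih2 =>
      show 2 * (2 - (2 - (q + q⁻¹)/2)) * F (n+1) _ - F n _ = _
      rw [ih1, ih2]
      simp only [inv_pow]
      field_simp
      ring

lemma exists_q (k : ℕ) (hk : 3 ≤ k) (y : ℝ) (hy0 : 0 < y) (hy1 : y < 1) (hF : F k y = 1) :
    ∃ q : ℝ, 1 < q ∧ q < 3 ∧ q ^ k * (3 - q) = 3 * q - 1 ∧ y = 2 - (q + q⁻¹)/2 := by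
  set c : ℝ := 2 - y with hc
  have hc1 : 1 < c := by simp [hc]; linarith
  have hd : 0 < c^2 - 1 := by nlinarith
  set q : ℝ := c + Real.sqrt (c^2 - 1) with hqdef
  have hs : Real.sqrt (c^2-1) > 0 := Real.sqrt_pos.mpr hd
  have hq1 : 1 < q := by simp only [hqdef]; linarith
  have hq0 : q ≠ 0 := by positivity
  have hsq : (Real.sqrt (c^2-1))^2 = c^2 - 1 := Real.sq_sqrt hd.le
  have hqc : q^2 - 2*c*q + 1 = 0 := by
    simp only [hqdef]; nlinarith [hsq]
  have hinv : q⁻¹ = 2*c - q := by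
    field_simp; nlinarith [hqc]
  have hyq : y = 2 - (q + q⁻¹)/2 := by rw [hinv]; simp [hc]
  have hcf := closed_form q hq1 k
  rw [← hyq, hF] at hcf
  have hqk1 : 1 < q ^ k := one_lt_pow₀ hq1 (by omega)
  have hqk0 : (0:ℝ) < q ^ k := by positivity
  rw [inv_pow] at hcf
  field_simp at hcf
  have hmul : ((q^k) - 1) * ((3-q)*q^k - (3*q-1)) = 0 := by linear_combination -hcf
  have hne : (q^k) - 1 ≠ 0 := by linarith
  have heq3 : (3-q)*q^k = 3*q - 1 := by
    rcases mul_eq_zero.mp hmul with h | h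
    · exact absurd h hne
    · linarith
  refine ⟨q, hq1, ?_, by linarith [heq3], hyq⟩
  by_contra h
  push_neg at h
  nlinarith [mul_nonneg (by linarith : (0:ℝ) ≤ q - 3) hqk0.le]

lemma q_ge_two (k : ℕ) (hk : 3 ≤ k) (q : ℝ) (hq1 : 1 < q) (hq3 : q < 3)
    (heq : q ^ k * (3 - q) = 3 * q - 1) : 2 ≤ q := by
  by_contra h
  push_neg at h
  have h3 : q ^ 3 ≤ q ^ k := pow_le_pow_right₀ hq1.le (by omega)
  have hfac : q^3*(3-q) - (3*q-1) = (q-1)*(q+1)*((q-1)*(2-q)+1) := by ring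
  have hpos : 0 < (q-1)*(q+1)*((q-1)*(2-q)+1) :=
    mul_pos (mul_pos (by linarith) (by linarith)) (by nlinarith)
  nlinarith [mul_le_mul_of_nonneg_right h3 (by linarith : (0:ℝ) ≤ 3 - q)]

lemma nat_ineq : ∀ k : ℕ, 5 ≤ k → 8*(k+2) < 3*2^k := by
  intro k hk
  induction k, hk using Nat.le_induction with
  | base => norm_num
  | succ n hn ih =>
    have : 8 ≤ 3*2^n := by
      calc (8:ℕ) ≤ 3*2^5 := by norm_num
      _ ≤ 3*2^n := by gcongr <;> omega
    calc 8*(n+1+2) = 8*(n+2) + 8 := by ring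
    _ < 3*2^n + 3*2^n := by omega
    _ = 3*2^(n+1) := by ring

lemma gap (k : ℕ) (hk : 3 ≤ k) (q : ℝ) (h2 : 2 ≤ q) (h3 : q < 3)
    (heq : q ^ k * (3 - q) = 3 * q - 1) : 3 - q < 3 / ((k:ℝ) + 2) := by
  have hq0 : (0:ℝ) < q := by linarith
  have hk2 : (0:ℝ) < (k:ℝ) + 2 := by positivity
  rw [lt_div_iff₀ hk2]
  rcases Nat.lt_or_ge k 5 with h5 | h5
  · interval_cases k
    · push_cast
      by_contra hcon
      push_neg at hcon
      have hq24 : q ≤ 12/5 := by nlinarith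
      have hh : (0:ℝ) ≤ (q-2)*(12/5-q) := mul_nonneg (by linarith) (by linarith)
      have hpos : 0 < (q-1)*(q+1)*((q-1)*(2-q)+1) :=
        mul_pos (mul_pos (by linarith) (by linarith)) (by nlinarith)
      nlinarith [hpos]
    · push_cast
      by_contra hcon
      push_neg at hcon
      have hq25 : q ≤ 5/2 := by nlinarith
      have h16 : (16:ℝ) ≤ q^4 := by nlinarith [sq_nonneg (q^2-4), sq_nonneg (q-2)]
      have : (8:ℝ) ≤ q^4*(3-q) := by
        nlinarith [mul_le_mul_of_nonneg_right h16 (by linarith : (0:ℝ) ≤ 3 - q)]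
      nlinarith
  · have h8 : 8*((k:ℝ)+2) < 3*2^k := by exact_mod_cast nat_ineq k h5
    have hpk : (2:ℝ)^k ≤ q^k := pow_le_pow_left₀ (by norm_num) h2 k
    have hq8 : (3-q) * 2^k ≤ 3*q - 1 := by
      calc (3-q) * 2^k ≤ (3-q) * q^k := by
            apply mul_le_mul_of_nonneg_left hpk (by linarith)
      _ = 3*q - 1 := by linarith [heq]
    have h2k : (0:ℝ) < 2^k := by positivity
    have hb : 3*q - 1 < 8 := by linarith
    have : (3-q) * ((k:ℝ)+2) * 2^k < 3 * 2^k := by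
      calc (3-q) * ((k:ℝ)+2) * 2^k = ((3-q) * 2^k) * ((k:ℝ)+2) := by ring
      _ ≤ (3*q-1) * ((k:ℝ)+2) := by apply mul_le_mul_of_nonneg_right hq8 hk2.le
      _ < 8 * ((k:ℝ)+2) := by nlinarith
      _ < 3 * 2^k := h8
    nlinarith [this]

lemma vAnti (m : ℕ) (hm : 1 ≤ m) :
    StrictAntiOn (fun t : ℝ => t^m * (3-t)) (Set.Icc ((3*(m:ℝ))/((m:ℝ)+1)) 3) := by
  have hm1 : (0:ℝ) < (m:ℝ)+1 := by positivity
  have ha : (0:ℝ) < (3*(m:ℝ))/((m:ℝ)+1) := by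
    apply div_pos _ hm1
    have : (1:ℝ) ≤ (m:ℝ) := by exact_mod_cast hm
    linarith
  apply strictAntiOn_of_deriv_neg (convex_Icc _ _)
  · fun_prop
  · intro t ht
    rw [interior_Icc] at ht
    obtain ⟨h1, h2⟩ := ht
    have ht0 : 0 < t := lt_trans ha h1
    have hderiv : HasDerivAt (fun t : ℝ => t^m*(3-t)) ((↑m*t^(m-1))*(3-t) + t^m*(0-1)) t :=
      (hasDerivAt_pow m t).mul ((hasDerivAt_const t 3).sub (hasDerivAt_id t))
    rw [hderiv.deriv]
    have h3 : 3*(m:ℝ) < ((m:ℝ)+1)*t := by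
      rw [div_lt_iff₀ hm1] at h1; linarith
    have hpm : t^m = t^(m-1) * t := by
      rw [← pow_succ]; congr 1; omega
    have hp : 0 < t^(m-1) := pow_pos ht0 _
    rw [hpm]
    nlinarith [mul_pos hp ht0]

set_option maxHeartbeats 1000000 in
theorem stmt6 (x : ℕ → ℝ)
    (hx : ∀ k, 3 ≤ k → x k ∈ Set.Ioo (0:ℝ) 1 ∧ F k (x k) = 1) :
    (∀ k, 3 ≤ k → x (k+1) < x k) ∧
      Filter.Tendsto x Filter.atTop (nhds (1/3 : ℝ)) := by
  have key : ∀ k : ℕ, 3 ≤ k → ∃ q : ℝ, 2 ≤ q ∧ q < 3 ∧ 3 - q < 3/((k:ℝ)+2) ∧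
      q^k*(3-q) = 3*q-1 ∧ x k = 2 - (q + q⁻¹)/2 := by
    intro k hk
    obtain ⟨⟨h0, h1⟩, hF⟩ := hx k hk
    obtain ⟨q, hq1, hq3, heq, hxy⟩ := exists_q k hk _ h0 h1 hF
    have h2 := q_ge_two k hk q hq1 hq3 heq
    exact ⟨q, h2, hq3, gap k hk q h2 hq3 heq, heq, hxy⟩
  constructor
  · -- monotonicity
    intro k hk
    obtain ⟨q, hq2, hq3, hqg, hqe, hqx⟩ := key k hk
    obtain ⟨r, hr2, hr3, hrg, hre, hrx⟩ := key (k+1) (by omega)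
    have hq0 : (0:ℝ) < q := by linarith
    have hr0 : (0:ℝ) < r := by linarith
    have hqi : q * q⁻¹ = 1 := mul_inv_cancel₀ (by positivity)
    have hri : r * r⁻¹ = 1 := mul_inv_cancel₀ (by positivity)
    suffices hrq : q < r by
      rw [hqx, hrx]
      have hqr1 : 1 < q * r := by nlinarith
      have hdiff : r + r⁻¹ - (q + q⁻¹) = (r - q)*(q*r - 1) * (q⁻¹ * r⁻¹) := by
        field_simp
        ring
      have hpos : 0 < (r - q)*(q*r - 1) * (q⁻¹ * r⁻¹) := by
        apply mul_pos (mul_pos (by linarith) (by linarith))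
        have h1 : 0 < q⁻¹ := by positivity
        have h2 : 0 < r⁻¹ := by positivity
        positivity
      linarith
    by_contra hcon
    push_neg at hcon
    -- r ≤ q; both lie in the interval where t ↦ t^(k+1)(3-t) is strictly decreasing
    have hk2 : (0:ℝ) < (k:ℝ)+2 := by positivity
    have hk3 : (0:ℝ) < (k:ℝ)+3 := by positivity
    have hA := vAnti (k+1) (by omega)
    have hcast : ((k+1 : ℕ) : ℝ) = (k:ℝ) + 1 := by push_cast; ring
    rw [hcast] at hA
    have haq : 3*((k:ℝ)+1)/(((k:ℝ)+1)+1) ≤ q := by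
      rw [div_le_iff₀ (by linarith)]
      rw [lt_div_iff₀ hk2] at hqg
      nlinarith
    have har : 3*((k:ℝ)+1)/(((k:ℝ)+1)+1) ≤ r := by
      rw [div_le_iff₀ (by linarith)]
      have hcast2 : ((k+1 : ℕ) : ℝ) + 2 = (k:ℝ) + 3 := by push_cast; ring
      rw [hcast2, lt_div_iff₀ hk3] at hrg
      nlinarith
    have hqmem : q ∈ Set.Icc (3*((k:ℝ)+1)/(((k:ℝ)+1)+1)) 3 := ⟨haq, by linarith⟩
    have hrmem : r ∈ Set.Icc (3*((k:ℝ)+1)/(((k:ℝ)+1)+1)) 3 := ⟨har, by linarith⟩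
    have hqe' : q^k*(3-q)*q = (3*q-1)*q := by rw [hqe]
    rcases eq_or_lt_of_le hcon with heqq | hlt
    · -- r = q : contradiction from the two equations
      rw [heqq] at hre
      rw [pow_succ] at hre
      nlinarith [hre, hqe', sq_nonneg (q-2)]
    · -- r < q : strict antitonicity contradiction
      have hvv := hA hrmem hqmem hlt
      simp only [] at hvv
      rw [pow_succ q k] at hvv
      rw [pow_succ r k] at hvv hre
      -- hvv : q^k*q*(3-q) < r^k*r*(3-r), hre : r^k*r*(3-r) = 3r-1
      nlinarith [hvv, hre, hqe', sq_nonneg (q-2)]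
  · -- limit
    have hbound : ∀ k, 3 ≤ k → 1/3 ≤ x k ∧ x k ≤ 1/3 + 6*(1/2:ℝ)^k := by
      intro k hk
      obtain ⟨q, hq2, hq3, hqg, hqe, hqx⟩ := key k hk
      have hq0 : (0:ℝ) < q := by linarith
      have hqi : q * q⁻¹ = 1 := mul_inv_cancel₀ (by positivity)
      have hxval : x k - 1/3 = (3*q-1)*(3-q)/(6*q) := by
        rw [hqx]; field_simp; ring
      have hfrac0 : 0 ≤ (3*q-1)*(3-q)/(6*q) :=
        div_nonneg (mul_nonneg (by linarith) (by linarith)) (by linarith)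
      have hε : (0:ℝ) ≤ (1/2:ℝ)^k := by positivity
      have h2k : (0:ℝ) < (2:ℝ)^k := by positivity
      have hhalf : (1/2:ℝ)^k = 1/(2:ℝ)^k := by rw [div_pow, one_pow]
      have hpk : (2:ℝ)^k ≤ q^k := pow_le_pow_left₀ (by norm_num) hq2 k
      have h3q : 3 - q ≤ 8*(1/2:ℝ)^k := by
        rw [hhalf]
        rw [show (8:ℝ) * (1/(2:ℝ)^k) = 8/(2:ℝ)^k by ring, le_div_iff₀ h2k]
        calc (3-q) * 2^k ≤ (3-q) * q^k := mul_le_mul_of_nonneg_left hpk (by linarith)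
        _ = 3*q - 1 := by linarith [hqe]
        _ ≤ 8 := by linarith
      constructor
      · linarith [hxval, hfrac0]
      · have hub : (3*q-1)*(3-q)/(6*q) ≤ 6*(1/2:ℝ)^k := by
          rw [div_le_iff₀ (by linarith : (0:ℝ) < 6*q)]
          have hA : (3*q-1)*(3-q) ≤ 8*(8*(1/2:ℝ)^k) :=
            mul_le_mul (by linarith) h3q (by linarith) (by norm_num)
          nlinarith [mul_nonneg hε (by linarith : (0:ℝ) ≤ q - 2)]
        linarith [hxval, hub]
    have h0 : Filter.Tendsto (fun k : ℕ => (1/2:ℝ)^k) Filter.atTop (nhds 0) :=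
      tendsto_pow_atTop_nhds_zero_of_lt_one (by norm_num) (by norm_num)
    have hh : Filter.Tendsto (fun k : ℕ => 1/3 + 6*(1/2:ℝ)^k) Filter.atTop (nhds (1/3 + 6*0)) :=
      Filter.Tendsto.add tendsto_const_nhds (Filter.Tendsto.const_mul 6 h0)
    rw [show (1/3 + 6*0 : ℝ) = 1/3 by norm_num] at hh
    apply tendsto_of_tendsto_of_tendsto_of_le_of_le' tendsto_const_nhds hh
    · exact Filter.eventually_atTop.mpr ⟨3, fun k hk => (hbound k hk).1⟩
    · exact Filter.eventually_atTop.mpr ⟨3, fun k hk => (hbound k hk).2⟩
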